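/- arXiv:1905.04004 — 3 statements merged into one kernel-verified Lean document; each statement's English description precedes it below -/
import Mathlib

section
/- Let Ω ⊂ ℝ^d be measurable with finite measure, J : ℝ^d → ℝ≥0 bounded and even, and suppose there is J₀ > 0 such that ∫_Ω J(x−y) dy ≥ J₀ for a.e. x ∈ Ω. Then for every v ∈ L²(Ω): ‖v‖²_{L²(Ω)} ≤ (‖J‖_∞ / J₀) ‖v‖²_{L¹(Ω)} + (1/(2J₀)) ∫_Ω ∫_Ω J(x−y)(v(y) − v(x))² dy dx. -/
open MeasureTheory ENNReal


lemma exhaustion_lemma {X : Type*} [MeasurableSpace X] (ρ : Measure X) [IsFiniteMeasure ρ]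
    {𝒢 : Set X} (hne : 𝒢.Nonempty) (T : X → Set X) (hT : ∀ x, MeasurableSet (T x)) :
    ∃ u : ℕ → X, (∀ n, u n ∈ 𝒢) ∧ ∀ x ∈ 𝒢, ρ (T x \ ⋃ n, T (u n)) = 0 := by
  obtain ⟨x₀, hx₀⟩ := hne
  haveI : Nonempty 𝒢 := ⟨⟨x₀, hx₀⟩⟩
  set s : ℝ≥0∞ := ⨆ u : ℕ → 𝒢, ρ (⋃ n, T ((u n : X))) with hs
  have hstop : s ≠ ⊤ := by
    refine ne_top_of_le_ne_top (measure_ne_top ρ Set.univ) (iSup_le fun u => ?_)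
    exact measure_mono (Set.subset_univ _)
  have key : ∀ k : ℕ, ∃ u : ℕ → 𝒢, s - ((k : ℝ≥0∞))⁻¹ ≤ ρ (⋃ n, T ((u n : X))) := by
    intro k
    rcases eq_or_ne s 0 with h0 | h0
    · exact ⟨fun _ => ⟨x₀, hx₀⟩, by simp [h0]⟩
    · have hlt : s - ((k : ℝ≥0∞))⁻¹ < s :=
        ENNReal.sub_lt_self hstop h0 (by simp)
      obtain ⟨u, hu⟩ := lt_iSup_iff.mp hlt
      exact ⟨u, hu.le⟩
  choose U hU using key
  set u : ℕ → 𝒢 := fun n => U n.unpair.1 n.unpair.2 with hu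
  set W : Set X := ⋃ n, T ((u n : X)) with hW
  have hWm : MeasurableSet W := MeasurableSet.iUnion fun n => hT _
  have hsle : s ≤ ρ W := by
    refine ENNReal.le_of_forall_pos_le_add fun ε hε _ => ?_
    obtain ⟨k, hk⟩ := ENNReal.exists_inv_nat_lt (by exact_mod_cast hε.ne' : (ε : ℝ≥0∞) ≠ 0)
    have h1 : ρ (⋃ n, T ((U k n : X))) ≤ ρ W := by
      refine measure_mono (Set.iUnion_subset fun n => ?_)
      have : U k n = u (Nat.pair k n) := by simp [hu, Nat.unpair_pair]
      rw [this]
      exact Set.subset_iUnion (fun m => T ((u m : X))) _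
    calc s ≤ (s - ((k : ℝ≥0∞))⁻¹) + ((k : ℝ≥0∞))⁻¹ := le_tsub_add
    _ ≤ ρ W + ε := add_le_add (le_trans (hU k) h1) hk.le
  refine ⟨fun n => (u n : X), fun n => (u n).2, fun x hx => ?_⟩
  have hle : ρ (W ∪ T x) ≤ s := by
    have hcup : W ∪ T x = ⋃ n, T ((((fun n => Nat.casesOn n (⟨x, hx⟩ : 𝒢) u) n : 𝒢) : X)) := by
      ext z
      simp only [Set.mem_union, Set.mem_iUnion, hW]
      constructor
      · rintro (⟨n, hn⟩ | hz)
        · exact ⟨n + 1, hn⟩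
        · exact ⟨0, hz⟩
      · rintro ⟨(_ | n), hn⟩
        · exact Or.inr hn
        · exact Or.inl ⟨n, hn⟩
    rw [hcup, hs]
    exact le_iSup (fun w : ℕ → 𝒢 => ρ (⋃ n, T ((w n : X)))) _
  have hunion : ρ (W ∪ T x) = ρ W + ρ (T x \ W) := by
    rw [← Set.union_diff_self, measure_union (disjoint_sdiff_self_right)  ((hT x).diff hWm)]
  have : ρ W + ρ (T x \ W) ≤ ρ W + 0 := by
    rw [add_zero]; rw [hunion] at hle; exact hle.trans hsle
  exact le_antisymm ((ENNReal.add_le_add_iff_left (measure_ne_top ρ W)).mp this) zero_le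


lemma kernel_aemeasurable {d : ℕ} {Ω : Set (Fin d → ℝ)} (hΩ : MeasurableSet Ω)
    {J : (Fin d → ℝ) → ℝ}
    (hG : ∀ᵐ x ∂(volume.restrict Ω), AEMeasurable (fun y => J (x - y)) (volume.restrict Ω)) :
    AEMeasurable (fun p : (Fin d → ℝ) × (Fin d → ℝ) => J (p.1 - p.2))
      ((volume.restrict Ω).prod (volume.restrict Ω)) := by
  set μ : Measure (Fin d → ℝ) := volume.restrict Ω with hμdef
  rcases eq_or_ne μ 0 with hμ0 | hμ0
  · rw [hμ0, Measure.prod_zero]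
    exact aemeasurable_zero_measure
  set T : (Fin d → ℝ) → Set (Fin d → ℝ) := fun x => (fun z => x - z) ⁻¹' Ω with hT
  have hTm : ∀ x, MeasurableSet (T x) := fun x => (measurable_const.sub measurable_id) hΩ
  set 𝒢 : Set (Fin d → ℝ) := {x | AEMeasurable J (volume.restrict (T x))} with h𝒢
  have hpre : ∀ x : Fin d → ℝ, (fun z : Fin d → ℝ => x - z) ⁻¹' (T x) = Ω := by
    intro x; ext z; simp [hT, sub_sub_cancel]
  have hGae : ∀ᵐ x ∂μ, x ∈ 𝒢 := by
    filter_upwards [hG] with x hx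
    have hmp : MeasurePreserving (fun z : Fin d → ℝ => x - z) volume volume :=
      Measure.measurePreserving_sub_left volume x
    have hemb : MeasurableEmbedding (fun z : Fin d → ℝ => x - z) :=
      (MeasurableEquiv.subLeft x).measurableEmbedding
    have hmap : volume.restrict (T x) = Measure.map (fun z => x - z) μ := by
      conv_lhs => rw [← hmp.map_eq]
      rw [Measure.restrict_map hmp.measurable (hTm x), hpre x]
    show AEMeasurable J (volume.restrict (T x))
    rw [hmap, hemb.aemeasurable_map_iff]
    exact hx
  have hne : 𝒢.Nonempty := by
    rcases Set.eq_empty_or_nonempty 𝒢 with h | h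
    · exfalso
      apply hμ0
      have h2 : ∀ᵐ x ∂μ, False := by
        filter_upwards [hGae] with x hx
        rw [h] at hx
        exact hx
      have := ae_iff.mp h2
      simpa using Measure.measure_univ_eq_zero.mp (by simpa using this)
    · exact h
  haveI hfinm : ∀ m : ℕ, IsFiniteMeasure
      (volume.restrict (spanningSets (volume : Measure (Fin d → ℝ)) m)) := by
    intro m
    constructor
    rw [Measure.restrict_apply_univ]
    exact measure_spanningSets_lt_top volume m
  choose u hu𝒢 hu0 using fun m : ℕ =>
    exhaustion_lemma (volume.restrict (spanningSets (volume : Measure (Fin d → ℝ)) m)) hne T hTm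
  set U : Set (Fin d → ℝ) := ⋃ m, ⋃ n, T (u m n) with hU
  have hUm : MeasurableSet U := .iUnion fun m => .iUnion fun n => hTm _
  have hJU : AEMeasurable J (volume.restrict U) := by
    rw [hU, aemeasurable_iUnion_iff]
    intro m
    rw [aemeasurable_iUnion_iff]
    intro n
    exact hu𝒢 m n
  have hcov : ∀ x ∈ 𝒢, volume (T x \ U) = 0 := by
    intro x hx
    have hdecomp : T x \ U = ⋃ m, ((T x \ U) ∩ spanningSets (volume : Measure (Fin d → ℝ)) m) := by
      rw [← Set.inter_iUnion, iUnion_spanningSets, Set.inter_univ]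
    rw [hdecomp]
    refine measure_iUnion_null fun m => ?_
    have h1 : (T x \ U) ∩ spanningSets (volume : Measure (Fin d → ℝ)) m
        ⊆ (T x \ ⋃ n, T (u m n)) ∩ spanningSets (volume : Measure (Fin d → ℝ)) m :=
      Set.inter_subset_inter_left _ (Set.diff_subset_diff_right
        (Set.subset_iUnion (fun m' => ⋃ n, T (u m' n)) m))
    refine measure_mono_null h1 ?_
    have h2 := hu0 m x hx
    rwa [Measure.restrict_apply ((hTm x).diff (MeasurableSet.iUnion fun n => hTm _))] at h2
  obtain ⟨g, hgm, hg⟩ := hJU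
  refine ⟨fun p => g (p.1 - p.2), hgm.comp (measurable_fst.sub measurable_snd), ?_⟩
  have hg' : volume ({z | ¬ J z = g z} ∩ U) = 0 := by
    have h3 := ae_iff.mp hg
    rwa [Measure.restrict_apply' hUm] at h3
  obtain ⟨N, hNsub, hNm, hN0⟩ := exists_measurable_superset_of_null hg'
  have hmain : (μ.prod μ) ((fun p : (Fin d → ℝ) × (Fin d → ℝ) => p.1 - p.2) ⁻¹' (N ∪ Uᶜ)) = 0 := by
    rw [Measure.prod_apply (s := (fun p : (Fin d → ℝ) × (Fin d → ℝ) => p.1 - p.2) ⁻¹' (N ∪ Uᶜ)) ((measurable_fst.sub measurable_snd) (hNm.union hUm.compl))]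
    have hslice : ∀ᵐ x ∂μ, μ (Prod.mk x ⁻¹'
        ((fun p : (Fin d → ℝ) × (Fin d → ℝ) => p.1 - p.2) ⁻¹' (N ∪ Uᶜ))) = 0 := by
      filter_upwards [hGae] with x hx
      have hmp : MeasurePreserving (fun z : Fin d → ℝ => x - z) volume volume :=
        Measure.measurePreserving_sub_left volume x
      have hsplit : Prod.mk x ⁻¹'
          ((fun p : (Fin d → ℝ) × (Fin d → ℝ) => p.1 - p.2) ⁻¹' (N ∪ Uᶜ))
          = {y | x - y ∈ N} ∪ {y | x - y ∈ Uᶜ} := by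
        ext y
        simp [Set.mem_union]
      rw [hsplit]
      refine measure_union_null ?_ ?_
      · have : μ {y | x - y ∈ N} ≤ volume ((fun y : Fin d → ℝ => x - y) ⁻¹' N) :=
          le_trans (Measure.restrict_le_self _) (le_refl _)
        refine le_antisymm (le_trans this ?_) zero_le
        rw [hmp.measure_preimage hNm.nullMeasurableSet, hN0]
      · have heq : {y | x - y ∈ Uᶜ} ∩ Ω = (fun y : Fin d → ℝ => x - y) ⁻¹' (T x \ U) := by
          ext y
          simp only [Set.mem_inter_iff, Set.mem_setOf_eq, Set.mem_preimage, Set.mem_diff,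
            Set.mem_compl_iff]
          constructor
          · rintro ⟨h1, h2⟩
            exact ⟨by simpa [hT, _root_.sub_sub_cancel] using h2, h1⟩
          · rintro ⟨h1, h2⟩
            exact ⟨h2, by simpa [hT, _root_.sub_sub_cancel] using h1⟩
        rw [hμdef, Measure.restrict_apply' hΩ, heq,
          hmp.measure_preimage (((hTm x).diff hUm).nullMeasurableSet)]
        exact hcov x hx
    calc ∫⁻ x, μ (Prod.mk x ⁻¹'
        ((fun p : (Fin d → ℝ) × (Fin d → ℝ) => p.1 - p.2) ⁻¹' (N ∪ Uᶜ))) ∂μ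
        = ∫⁻ _, 0 ∂μ := lintegral_congr_ae hslice
      _ = 0 := lintegral_zero
  rw [Filter.eventuallyEq_iff_exists_mem]
  refine ⟨((fun p : (Fin d → ℝ) × (Fin d → ℝ) => p.1 - p.2) ⁻¹' (N ∪ Uᶜ))ᶜ, ?_, ?_⟩
  · rw [mem_ae_iff, compl_compl]
    exact hmain
  · intro p hp
    simp only [Set.mem_compl_iff, Set.mem_preimage, Set.mem_union, not_or] at hp
    by_contra hne'
    rcases Classical.em (p.1 - p.2 ∈ U) with hU' | hU'
    · exact hp.1 (hNsub ⟨hne', hU'⟩)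
    · exact hp.2 hU'

theorem nonlocal_poincare {d : ℕ} (Ω : Set (Fin d → ℝ)) (hΩ : MeasurableSet Ω)
    (hfin : volume Ω < ⊤) (J : (Fin d → ℝ) → ℝ) (hJ0 : ∀ z, 0 ≤ J z)
    (Jmax : ℝ) (hJbd : ∀ z, J z ≤ Jmax) (hJeven : ∀ z, J (-z) = J z)
    (J₀ : ℝ) (hJ₀ : 0 < J₀)
    (hm : ∀ᵐ x ∂(volume.restrict Ω), J₀ ≤ ∫ y in Ω, J (x - y))
    (v : (Fin d → ℝ) → ℝ) (hv : MemLp v 2 (volume.restrict Ω)) :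
    ∫ x in Ω, (v x) ^ 2
      ≤ (Jmax / J₀) * (∫ x in Ω, |v x|) ^ 2
        + (1 / (2 * J₀)) * ∫ x in Ω, ∫ y in Ω, J (x - y) * (v y - v x) ^ 2 := by
  by_cases hzero : volume Ω = 0
  · rw [show volume.restrict Ω = 0 from Measure.restrict_eq_zero.mpr hzero]
    simp
  set μ : Measure (Fin d → ℝ) := volume.restrict Ω with hμdef
  haveI : IsFiniteMeasure μ := ⟨by rw [hμdef, Measure.restrict_apply_univ]; exact hfin⟩
  have hJmax0 : 0 ≤ Jmax := le_trans (hJ0 0) (hJbd 0)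
  have hJflip : ∀ z w : Fin d → ℝ, J (z - w) = J (w - z) := by
    intro z w
    have := hJeven (w - z)
    rwa [neg_sub] at this
  have hmint : ∀ᵐ x ∂μ, J₀ ≤ (∫ y, J (x - y) ∂μ) ∧ Integrable (fun y => J (x - y)) μ := by
    filter_upwards [hm] with x hx
    refine ⟨hx, ?_⟩
    by_contra hni
    rw [show (∫ y in Ω, J (x - y)) = 0 from integral_undef hni] at hx
    exact absurd hx (not_le.mpr hJ₀)
  have hG : ∀ᵐ x ∂μ, AEMeasurable (fun y => J (x - y)) μ := by
    filter_upwards [hmint] with x hx using hx.2.aemeasurable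
  have hKae := kernel_aemeasurable hΩ hG
  set π : Measure ((Fin d → ℝ) × (Fin d → ℝ)) := μ.prod μ with hπdef
  set M : ((Fin d → ℝ) × (Fin d → ℝ)) → ℝ := hKae.mk _ with hM
  have hMmeas : Measurable M := hKae.measurable_mk
  have hMK : (fun p : (Fin d → ℝ) × (Fin d → ℝ) => J (p.1 - p.2)) =ᵐ[π] M := hKae.ae_eq_mk
  set W : ((Fin d → ℝ) × (Fin d → ℝ)) → ℝ := fun p => max 0 (min (M p) Jmax) with hWdef
  have hWmeas : Measurable W := measurable_const.max (hMmeas.min measurable_const)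
  have hKW : (fun p : (Fin d → ℝ) × (Fin d → ℝ) => J (p.1 - p.2)) =ᵐ[π] W := by
    filter_upwards [hMK] with p hp
    rw [hWdef]
    dsimp only
    rw [← hp, min_eq_left (hJbd _), max_eq_right (hJ0 _)]
  have hW0 : ∀ p, 0 ≤ W p := fun p => le_max_left _ _
  have hWbd : ∀ p, W p ≤ Jmax := fun p => max_le hJmax0 (min_le_right _ _)
  have hv2 : Integrable (fun x => v x ^ 2) μ := hv.integrable_sq
  have hv1 : Integrable v μ := hv.integrable one_le_two
  have habs : Integrable (fun x => |v x|) μ := hv1.abs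
  have f1 : Integrable (fun p : (Fin d → ℝ) × (Fin d → ℝ) => v p.1 ^ 2) π := by
    have h := hv2.mul_prod (integrable_const (1 : ℝ) : Integrable (fun _ : Fin d → ℝ => (1:ℝ)) μ)
    simpa using h
  have f2 : Integrable (fun p : (Fin d → ℝ) × (Fin d → ℝ) => v p.2 ^ 2) π := by
    have h := (integrable_const (1 : ℝ) : Integrable (fun _ : Fin d → ℝ => (1:ℝ)) μ).mul_prod hv2
    simpa using h
  have f3 : Integrable (fun p : (Fin d → ℝ) × (Fin d → ℝ) => v p.1 * v p.2) π :=
    hv1.mul_prod hv1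
  have f4 : Integrable (fun p : (Fin d → ℝ) × (Fin d → ℝ) => |v p.1| * |v p.2|) π :=
    habs.mul_prod habs
  have fsq : Integrable (fun p : (Fin d → ℝ) × (Fin d → ℝ) => (v p.2 - v p.1) ^ 2) π := by
    have hfun : (fun p : (Fin d → ℝ) × (Fin d → ℝ) => (v p.2 - v p.1) ^ 2)
        = fun p => v p.2 ^ 2 - 2 * (v p.1 * v p.2) + v p.1 ^ 2 := by funext p; ring
    rw [hfun]
    exact (f2.sub (f3.const_mul 2)).add f1
  have hWint : ∀ {F : ((Fin d → ℝ) × (Fin d → ℝ)) → ℝ}, Integrable F π →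
      Integrable (fun p => W p * F p) π := fun {F} hF =>
    hF.bdd_mul (c := Jmax) hWmeas.aestronglyMeasurable (Filter.Eventually.of_forall fun p => by
      rw [Real.norm_eq_abs, abs_of_nonneg (hW0 p)]; exact hWbd p)
  set I2 : ℝ := ∫ x, v x ^ 2 ∂μ with hI2def
  set L : ℝ := ∫ x, |v x| ∂μ with hLdef
  set A : ℝ := ∫ p, W p * v p.1 ^ 2 ∂π with hAdef
  set B : ℝ := ∫ p, W p * v p.2 ^ 2 ∂π with hBdef
  set C : ℝ := ∫ p, W p * (v p.1 * v p.2) ∂π with hCdef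
  set G : ℝ := ∫ p, W p * (v p.2 - v p.1) ^ 2 ∂π with hGdef
  -- slice equalities
  have hslice1 : ∀ᵐ x ∂μ, (fun y => J (x - y)) =ᵐ[μ] fun y => W (x, y) := by
    have h := Measure.ae_ae_of_ae_prod (μ := μ) (ν := μ) hKW
    filter_upwards [h] with x hx using hx
  have hswapQMP : Measure.QuasiMeasurePreserving (Prod.swap : _ × _ → _ × _) π π := by
    refine ⟨measurable_swap, ?_⟩
    rw [hπdef, Measure.prod_swap]
  have hKWswap := hswapQMP.ae_eq hKW
  have hslice2 : ∀ᵐ y ∂μ, (fun x => J (x - y)) =ᵐ[μ] fun x => W (x, y) := by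
    have h := Measure.ae_ae_of_ae_prod (μ := μ) (ν := μ) hKWswap
    filter_upwards [h] with y hy
    filter_upwards [hy] with x hx
    simpa using hx
  -- lower bound for A
  have hAeq : A = ∫ x, (∫ y, W (x, y) * v x ^ 2 ∂μ) ∂μ :=
    (integral_integral (f := fun x y => W (x, y) * v x ^ 2) (hWint f1)).symm
  have hAint : Integrable (fun x => ∫ y, W (x, y) * v x ^ 2 ∂μ) μ :=
    (hWint f1).integral_prod_left
  have hAlb : ∀ᵐ x ∂μ, J₀ * v x ^ 2 ≤ ∫ y, W (x, y) * v x ^ 2 ∂μ := by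
    filter_upwards [hslice1, hmint] with x hx1 hx2
    have h1 : ∫ y, W (x, y) * v x ^ 2 ∂μ = (∫ y, W (x, y) ∂μ) * v x ^ 2 :=
      integral_mul_const _ _
    have h3 : J₀ ≤ ∫ y, W (x, y) ∂μ := by
      rw [← integral_congr_ae hx1]
      exact hx2.1
    rw [h1]
    exact mul_le_mul_of_nonneg_right h3 (sq_nonneg _)
  have hAgt : J₀ * I2 ≤ A := by
    have h := integral_mono_ae (hv2.const_mul J₀) hAint hAlb
    rw [integral_const_mul] at h
    rwa [hAeq]
  -- lower bound for B
  have hBeq : B = ∫ y, (∫ x, W (x, y) * v y ^ 2 ∂μ) ∂μ := by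
    have h2 := integral_integral (f := fun x y => W (x, y) * v y ^ 2) (hWint f2)
    have h1 := integral_integral_swap (f := fun x y => W (x, y) * v y ^ 2) (hWint f2)
    rw [hBdef, ← h2, h1]
  have hBint : Integrable (fun y => ∫ x, W (x, y) * v y ^ 2 ∂μ) μ :=
    (hWint f2).integral_prod_right
  have hBlb : ∀ᵐ y ∂μ, J₀ * v y ^ 2 ≤ ∫ x, W (x, y) * v y ^ 2 ∂μ := by
    filter_upwards [hslice2, hmint] with y hy1 hy2
    have h1 : ∫ x, W (x, y) * v y ^ 2 ∂μ = (∫ x, W (x, y) ∂μ) * v y ^ 2 :=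
      integral_mul_const _ _
    have h3 : J₀ ≤ ∫ x, W (x, y) ∂μ := by
      rw [← integral_congr_ae hy1]
      have hflip : (∫ x, J (x - y) ∂μ) = ∫ x, J (y - x) ∂μ := by
        simp only [hJflip]
      rw [hflip]
      exact hy2.1
    rw [h1]
    exact mul_le_mul_of_nonneg_right h3 (sq_nonneg _)
  have hBgt : J₀ * I2 ≤ B := by
    have h := integral_mono_ae (hv2.const_mul J₀) hBint hBlb
    rw [integral_const_mul] at h
    rwa [hBeq]
  -- upper bound for C
  have hCle : C ≤ Jmax * L ^ 2 := by
    have hle : ∀ p : (Fin d → ℝ) × (Fin d → ℝ),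
        W p * (v p.1 * v p.2) ≤ Jmax * (|v p.1| * |v p.2|) := fun p => by
      calc W p * (v p.1 * v p.2) ≤ W p * |v p.1 * v p.2| :=
            mul_le_mul_of_nonneg_left (le_abs_self _) (hW0 p)
        _ = W p * (|v p.1| * |v p.2|) := by rw [abs_mul]
        _ ≤ Jmax * (|v p.1| * |v p.2|) :=
            mul_le_mul_of_nonneg_right (hWbd p) (mul_nonneg (abs_nonneg _) (abs_nonneg _))
    have h := integral_mono (hWint f3) (f4.const_mul Jmax) hle
    rw [integral_const_mul] at h
    have hpm : (∫ p : (Fin d → ℝ) × (Fin d → ℝ), |v p.1| * |v p.2| ∂π)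
        = (∫ x, |v x| ∂μ) * ∫ x, |v x| ∂μ :=
      integral_prod_mul (fun x => |v x|) (fun x => |v x|)
    rw [hpm] at h
    calc C ≤ Jmax * ((∫ x, |v x| ∂μ) * ∫ x, |v x| ∂μ) := h
      _ = Jmax * L ^ 2 := by rw [← hLdef]; ring
  -- decomposition of G
  have hGeq : G = B - 2 * C + A := by
    have hfun : (fun p : (Fin d → ℝ) × (Fin d → ℝ) => W p * (v p.2 - v p.1) ^ 2)
        = fun p => (W p * v p.2 ^ 2 - 2 * (W p * (v p.1 * v p.2))) + W p * v p.1 ^ 2 := by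
      funext p; ring
    have e1 : ∫ p, (W p * v p.2 ^ 2 - 2 * (W p * (v p.1 * v p.2)) + W p * v p.1 ^ 2) ∂π
        = (∫ p, (W p * v p.2 ^ 2 - 2 * (W p * (v p.1 * v p.2))) ∂π)
          + ∫ p, W p * v p.1 ^ 2 ∂π :=
      integral_add ((hWint f2).sub ((hWint f3).const_mul 2)) (hWint f1)
    have e2 : ∫ p, (W p * v p.2 ^ 2 - 2 * (W p * (v p.1 * v p.2))) ∂π
        = (∫ p, W p * v p.2 ^ 2 ∂π) - ∫ p, 2 * (W p * (v p.1 * v p.2)) ∂π :=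
      integral_sub (hWint f2) ((hWint f3).const_mul 2)
    have e3 : ∫ p, 2 * (W p * (v p.1 * v p.2)) ∂π = 2 * ∫ p, W p * (v p.1 * v p.2) ∂π :=
      integral_const_mul 2 _
    rw [hGdef, hfun, e1, e2, e3]
  -- the double integral equals G
  have hDeq : (∫ x, ∫ y, J (x - y) * (v y - v x) ^ 2 ∂μ ∂μ) = G := by
    have hstep : ∀ᵐ x ∂μ, (∫ y, J (x - y) * (v y - v x) ^ 2 ∂μ)
        = ∫ y, W (x, y) * (v y - v x) ^ 2 ∂μ := by
      filter_upwards [hslice1] with x hx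
      refine integral_congr_ae ?_
      filter_upwards [hx] with y hy
      rw [hy]
    rw [integral_congr_ae hstep]
    exact integral_integral (f := fun x y => W (x, y) * (v y - v x) ^ 2) (hWint fsq)
  have h2J : (0 : ℝ) < 2 * J₀ := by linarith
  have hLnn : 0 ≤ L := integral_nonneg fun x => abs_nonneg _
  show I2 ≤ Jmax / J₀ * L ^ 2 + 1 / (2 * J₀) * ∫ x, ∫ y, J (x - y) * (v y - v x) ^ 2 ∂μ ∂μ
  rw [hDeq]
  have hmain : I2 ≤ (G + 2 * (Jmax * L ^ 2)) / (2 * J₀) := by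
    rw [le_div_iff₀ h2J]
    nlinarith [hAgt, hBgt, hCle, hGeq]
  have harith : (G + 2 * (Jmax * L ^ 2)) / (2 * J₀) = Jmax / J₀ * L ^ 2 + 1 / (2 * J₀) * G := by
    field_simp
    ring
  rw [← harith]
  exact hmain
end

section
/- Let Ω ⊂ ℝ^d be measurable, J : ℝ^d → ℝ≥0 even, ε > 0, a ≥ 0, and u : Ω → ℝ≥0 measurable with all integrals below finite. Then (a/2) ∫_Ω ∫_Ω J(x−y)(u(y) + u(x) + 2ε)(u(y) − u(x))(ln(u(y)+ε) − ln(u(x)+ε)) dy dx ≥ a ∫_Ω ∫_Ω J(x−y)(u(y) − u(x))² dy dx. -/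
open MeasureTheory

lemma log_key_aux : ∀ t : ℝ, 1 ≤ t → 2 * (t - 1) ≤ (t + 1) * Real.log t := by
  have hder : ∀ x : ℝ, 0 < x → HasDerivAt (fun t : ℝ => (t + 1) * Real.log t - 2 * (t - 1))
      (1 * Real.log x + (x + 1) * x⁻¹ - 2 * 1) x := fun x hx0 =>
    (((hasDerivAt_id x).add_const 1).mul (Real.hasDerivAt_log hx0.ne')).sub
      (((hasDerivAt_id x).sub_const 1).const_mul 2)
  have hmono : MonotoneOn (fun t : ℝ => (t + 1) * Real.log t - 2 * (t - 1)) (Set.Ici 1) := by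
    apply monotoneOn_of_deriv_nonneg (convex_Ici 1)
    · apply ContinuousOn.sub
      · exact (continuousOn_id.add continuousOn_const).mul
          (Real.continuousOn_log.mono (by intro x hx; simp at hx ⊢; linarith))
      · fun_prop
    · intro x hx
      rw [interior_Ici] at hx
      exact (hder x (by linarith [Set.mem_Ioi.1 hx])).differentiableAt.differentiableWithinAt
    · intro x hx
      rw [interior_Ici] at hx
      have hx1 : (1:ℝ) < x := hx
      have hx0 : (0:ℝ) < x := by linarith
      rw [(hder x hx0).deriv]
      have hlog : 1 - x⁻¹ ≤ Real.log x := Real.one_sub_inv_le_log_of_pos hx0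
      have h2 : (x + 1) * x⁻¹ = 1 + x⁻¹ := by field_simp
      rw [h2]
      linarith
  intro t ht
  have := hmono (Set.self_mem_Ici) ht ht
  simp [Real.log_one] at this
  linarith

lemma key_half (s σ : ℝ) (hs : 0 < s) (hσ : 0 < σ) (h : σ ≤ s) :
    2 * (s - σ) ^ 2 ≤ (s + σ) * (s - σ) * (Real.log s - Real.log σ) := by
  have ht : 1 ≤ s / σ := (one_le_div hσ).2 h
  have hk := log_key_aux (s / σ) ht
  have hst : s = σ * (s / σ) := by field_simp
  set t := s / σ with htdef
  rw [← Real.log_div hs.ne' hσ.ne', ← htdef]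
  have ht1 : 0 ≤ t - 1 := by linarith
  have hk2 : (t - 1) * (2 * (t - 1)) ≤ (t - 1) * ((t + 1) * Real.log t) :=
    mul_le_mul_of_nonneg_left hk ht1
  rw [hst]
  nlinarith [mul_pos hσ hσ, sq_nonneg (t - 1)]

lemma key_ineq (s σ : ℝ) (hs : 0 < s) (hσ : 0 < σ) :
    2 * (s - σ) ^ 2 ≤ (s + σ) * (s - σ) * (Real.log s - Real.log σ) := by
  rcases le_total σ s with h | h
  · exact key_half s σ hs hσ h
  · have := key_half σ s hσ hs h
    nlinarith [this]

theorem self_diffusion_entropy_bound {d : ℕ} (Ω : Set (Fin d → ℝ))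
    (hΩ : MeasurableSet Ω) (J : (Fin d → ℝ) → ℝ) (hJ0 : ∀ z, 0 ≤ J z)
    (hJeven : ∀ z, J (-z) = J z) (ε a : ℝ) (hε : 0 < ε) (ha : 0 ≤ a)
    (u : (Fin d → ℝ) → ℝ) (hum : Measurable u) (hu0 : ∀ x, 0 ≤ u x)
    (h1 : IntegrableOn (fun p : (Fin d → ℝ) × (Fin d → ℝ) =>
      J (p.1 - p.2) * (u p.2 + u p.1 + 2 * ε) * (u p.2 - u p.1) *
        (Real.log (u p.2 + ε) - Real.log (u p.1 + ε))) (Ω ×ˢ Ω) (volume.prod volume))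
    (h2 : IntegrableOn (fun p : (Fin d → ℝ) × (Fin d → ℝ) =>
      J (p.1 - p.2) * (u p.2 - u p.1) ^ 2) (Ω ×ˢ Ω) (volume.prod volume)) :
    (a / 2) * ∫ x in Ω, ∫ y in Ω, J (x - y) * (u y + u x + 2 * ε) * (u y - u x) *
        (Real.log (u y + ε) - Real.log (u x + ε))
      ≥ a * ∫ x in Ω, ∫ y in Ω, J (x - y) * (u y - u x) ^ 2 := by
  set μ := volume.restrict Ω with hμ
  simp only [IntegrableOn] at h1 h2
  rw [← Measure.prod_restrict, ← hμ] at h1 h2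
  -- pointwise inequality
  have hpt : ∀ x y : Fin d → ℝ,
      2 * (J (x - y) * (u y - u x) ^ 2) ≤
        J (x - y) * (u y + u x + 2 * ε) * (u y - u x) *
          (Real.log (u y + ε) - Real.log (u x + ε)) := by
    intro x y
    have hk := key_ineq (u y + ε) (u x + ε) (by linarith [hu0 y]) (by linarith [hu0 x])
    have hJ := hJ0 (x - y)
    have hmul := mul_le_mul_of_nonneg_left hk hJ
    have e1 : u y + ε - (u x + ε) = u y - u x := by ring
    rw [e1] at hmul
    nlinarith [hmul]
  -- integrability of inner integrals
  have g1int : Integrable (fun x => ∫ y, J (x - y) * (u y + u x + 2 * ε) * (u y - u x) *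
      (Real.log (u y + ε) - Real.log (u x + ε)) ∂μ) μ := h1.integral_prod_left
  have g2int : Integrable (fun x => ∫ y, J (x - y) * (u y - u x) ^ 2 ∂μ) μ := h2.integral_prod_left
  have hae1 : ∀ᵐ x ∂μ, Integrable (fun y => J (x - y) * (u y + u x + 2 * ε) * (u y - u x) *
      (Real.log (u y + ε) - Real.log (u x + ε))) μ := h1.prod_right_ae
  have hae2 : ∀ᵐ x ∂μ, Integrable (fun y => J (x - y) * (u y - u x) ^ 2) μ := h2.prod_right_ae
  have hinner : ∀ᵐ x ∂μ, 2 * ∫ y, J (x - y) * (u y - u x) ^ 2 ∂μ ≤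
      ∫ y, J (x - y) * (u y + u x + 2 * ε) * (u y - u x) *
        (Real.log (u y + ε) - Real.log (u x + ε)) ∂μ := by
    filter_upwards [hae1, hae2] with x hx1 hx2
    rw [← integral_const_mul]
    exact integral_mono (hx2.const_mul 2) hx1 (fun y => hpt x y)
  have hkey : 2 * ∫ x, (∫ y, J (x - y) * (u y - u x) ^ 2 ∂μ) ∂μ ≤
      ∫ x, (∫ y, J (x - y) * (u y + u x + 2 * ε) * (u y - u x) *
        (Real.log (u y + ε) - Real.log (u x + ε)) ∂μ) ∂μ := by
    rw [← integral_const_mul]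
    exact integral_mono_ae (g2int.const_mul 2) g1int hinner
  have h2a : 0 ≤ a / 2 := by linarith
  calc a * ∫ x, (∫ y, J (x - y) * (u y - u x) ^ 2 ∂μ) ∂μ
      = (a / 2) * (2 * ∫ x, (∫ y, J (x - y) * (u y - u x) ^ 2 ∂μ) ∂μ) := by ring
    _ ≤ (a / 2) * ∫ x, (∫ y, J (x - y) * (u y + u x + 2 * ε) * (u y - u x) *
        (Real.log (u y + ε) - Real.log (u x + ε)) ∂μ) ∂μ := by
        exact mul_le_mul_of_nonneg_left hkey h2a
end

section
/- Let Ω ⊂ ℝ^d be measurable, J : ℝ^d → ℝ≥0, ε > 0, and u₁, u₂ : Ω → ℝ≥0 measurable with all integrals finite. Then the sum I₁₂ + I₂₁ ≥ 0, where I_{ik} = (1/2) ∫_Ω ∫_Ω J(x−y) [(u_i(y)+ε)(u_k(y)+ε) − (u_i(x)+ε)(u_k(x)+ε)] [ln(u_i(y)+ε) − ln(u_i(x)+ε)] dy dx for {i,k} = {1,2}, i ≠ k. -/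
open MeasureTheory

lemma log_diff_mul_nonneg {p q : ℝ} (hp : 0 < p) (hq : 0 < q) :
    0 ≤ (p - q) * (Real.log p - Real.log q) := by
  rcases le_total q p with h | h
  · exact mul_nonneg (by linarith) (by simpa [sub_nonneg] using Real.log_le_log hq h)
  · have h1 : p - q ≤ 0 := by linarith
    have h2 : Real.log p - Real.log q ≤ 0 := by simpa [sub_nonpos] using Real.log_le_log hp h
    nlinarith [mul_nonneg (neg_nonneg.2 h1) (neg_nonneg.2 h2)]

theorem cross_diffusion_entropy_nonneg {d : ℕ} (Ω : Set (Fin d → ℝ))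
    (hΩ : MeasurableSet Ω) (J : (Fin d → ℝ) → ℝ) (hJ0 : ∀ z, 0 ≤ J z)
    (ε : ℝ) (hε : 0 < ε) (u₁ u₂ : (Fin d → ℝ) → ℝ)
    (hm1 : Measurable u₁) (hm2 : Measurable u₂)
    (h01 : ∀ x, 0 ≤ u₁ x) (h02 : ∀ x, 0 ≤ u₂ x)
    (h1 : IntegrableOn (fun p : (Fin d → ℝ) × (Fin d → ℝ) =>
      J (p.1 - p.2) * ((u₁ p.2 + ε) * (u₂ p.2 + ε) - (u₁ p.1 + ε) * (u₂ p.1 + ε)) *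
        (Real.log (u₁ p.2 + ε) - Real.log (u₁ p.1 + ε))) (Ω ×ˢ Ω) (volume.prod volume))
    (h2 : IntegrableOn (fun p : (Fin d → ℝ) × (Fin d → ℝ) =>
      J (p.1 - p.2) * ((u₂ p.2 + ε) * (u₁ p.2 + ε) - (u₂ p.1 + ε) * (u₁ p.1 + ε)) *
        (Real.log (u₂ p.2 + ε) - Real.log (u₂ p.1 + ε))) (Ω ×ˢ Ω) (volume.prod volume)) :
    0 ≤ (1 / 2) * (∫ x in Ω, ∫ y in Ω, J (x - y) *
          ((u₁ y + ε) * (u₂ y + ε) - (u₁ x + ε) * (u₂ x + ε)) *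
          (Real.log (u₁ y + ε) - Real.log (u₁ x + ε)))
        + (1 / 2) * (∫ x in Ω, ∫ y in Ω, J (x - y) *
          ((u₂ y + ε) * (u₁ y + ε) - (u₂ x + ε) * (u₁ x + ε)) *
          (Real.log (u₂ y + ε) - Real.log (u₂ x + ε))) := by
  set μ := volume.restrict Ω with hμ
  set f : (Fin d → ℝ) × (Fin d → ℝ) → ℝ := fun p =>
      J (p.1 - p.2) * ((u₁ p.2 + ε) * (u₂ p.2 + ε) - (u₁ p.1 + ε) * (u₂ p.1 + ε)) *
        (Real.log (u₁ p.2 + ε) - Real.log (u₁ p.1 + ε)) with hf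
  set g : (Fin d → ℝ) × (Fin d → ℝ) → ℝ := fun p =>
      J (p.1 - p.2) * ((u₂ p.2 + ε) * (u₁ p.2 + ε) - (u₂ p.1 + ε) * (u₁ p.1 + ε)) *
        (Real.log (u₂ p.2 + ε) - Real.log (u₂ p.1 + ε)) with hg
  have h1' : Integrable f (μ.prod μ) := by
    rw [hμ, Measure.prod_restrict]; exact h1
  have h2' : Integrable g (μ.prod μ) := by
    rw [hμ, Measure.prod_restrict]; exact h2
  have e1 : (∫ x in Ω, ∫ y in Ω, f (x, y)) = ∫ p, f p ∂(μ.prod μ) :=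
    (MeasureTheory.integral_prod f h1').symm
  have e2 : (∫ x in Ω, ∫ y in Ω, g (x, y)) = ∫ p, g p ∂(μ.prod μ) :=
    (MeasureTheory.integral_prod g h2').symm
  show 0 ≤ (1/2) * (∫ x in Ω, ∫ y in Ω, f (x, y)) + (1/2) * (∫ x in Ω, ∫ y in Ω, g (x, y))
  rw [e1, e2, ← mul_add, ← integral_add h1' h2']
  have key : ∀ p, 0 ≤ f p + g p := by
    intro p
    obtain ⟨x, y⟩ := p
    have a1 : (0:ℝ) < u₁ x + ε := by have := h01 x; linarith
    have a2 : (0:ℝ) < u₂ x + ε := by have := h02 x; linarith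
    have b1 : (0:ℝ) < u₁ y + ε := by have := h01 y; linarith
    have b2 : (0:ℝ) < u₂ y + ε := by have := h02 y; linarith
    have hsum : f (x, y) + g (x, y) = J (x - y) *
        (((u₁ y + ε) * (u₂ y + ε) - (u₁ x + ε) * (u₂ x + ε)) *
         (Real.log ((u₁ y + ε) * (u₂ y + ε)) - Real.log ((u₁ x + ε) * (u₂ x + ε)))) := by
      simp only [hf, hg]
      rw [Real.log_mul b1.ne' b2.ne', Real.log_mul a1.ne' a2.ne']
      ring
    rw [hsum]
    exact mul_nonneg (hJ0 _) (log_diff_mul_nonneg (mul_pos b1 b2) (mul_pos a1 a2))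
  have : 0 ≤ ∫ p, (f p + g p) ∂(μ.prod μ) := integral_nonneg key
  linarith
end
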